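/- Let F be a linearly ordered field, A a magnitude of F, a ∈ F, and suppose the coset α = a + A is zeroless (0 ∉ a + A). Then the set U = {1} + a⁻¹ • A is multiplicatively idempotent: U * U = U, where * is the Minkowski product of sets. -/

import Mathlib

open Pointwise

/-- A *magnitude* of a linearly ordered field `F` is an order-convex additive subgroup of `F`,
given as a set: it contains `0`, is closed under addition and negation, and is order-convex. -/
def IsMagnitude {F : Type*} [Field F] [LinearOrder F] [IsStrictOrderedRing F] (A : Set F) : Prop :=
  (0 : F) ∈ A ∧ (∀ x ∈ A, ∀ y ∈ A, x + y ∈ A) ∧ (∀ x ∈ A, -x ∈ A) ∧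
    (∀ x ∈ A, ∀ y ∈ A, ∀ z : F, x ≤ z → z ≤ y → z ∈ A)

/-- Order relation on subsets of `F`: `S ≤ T` iff every element of `S` is below some element of `T`. -/
def SetLE {F : Type*} [Field F] [LinearOrder F] [IsStrictOrderedRing F] (S T : Set F) : Prop :=
  ∀ x ∈ S, ∃ y ∈ T, x ≤ y

theorem unity_idempotent {F : Type*} [Field F] [LinearOrder F] [IsStrictOrderedRing F]
    (A : Set F) (hA : IsMagnitude A) (a : F) (hzl : (0 : F) ∉ ({a} + A)) :
    ({1} + a⁻¹ • A) * ({1} + a⁻¹ • A) = {1} + a⁻¹ • A := by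
  obtain ⟨h0, hadd, hneg, hconv⟩ := hA
  have hna : -a ∉ A := fun h =>
    hzl (Set.mem_add.mpr ⟨a, rfl, -a, h, add_neg_cancel a⟩)
  have ha : a ≠ 0 := by rintro rfl; exact hna (by simpa using h0)
  have habsmem : ∀ x ∈ A, |x| ∈ A := by
    intro x hx
    rcases le_total 0 x with h | h
    · rwa [abs_of_nonneg h]
    · rw [abs_of_nonpos h]; exact hneg _ hx
  have habs : ∀ x ∈ A, |x| < |a| := by
    intro x hx
    by_contra hlt
    push_neg at hlt
    have h1 : |x| ∈ A := habsmem x hx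
    have h2 : -|x| ∈ A := hneg _ h1
    exact hna (hconv _ h2 _ h1 (-a) (by
      have := le_abs_self a; linarith) (by
      have := neg_abs_le a; linarith))
  have key : ∀ x ∈ A, ∀ y ∈ A, a⁻¹ * x * y ∈ A := by
    intro x hx y hy
    have hya : |y| ∈ A := habsmem y hy
    have h2 : (0 : F) < |a| := abs_pos.mpr ha
    have hb : |a⁻¹ * x * y| ≤ |y| := by
      rw [abs_mul, abs_mul, abs_inv]
      have h1 : |x| < |a| := habs x hx
      have h3 : |a|⁻¹ * |x| ≤ 1 := by
        rw [inv_mul_le_iff₀ h2]; simpa using h1.le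
      nlinarith [abs_nonneg y, abs_nonneg x, inv_nonneg.mpr h2.le]
    exact hconv _ (hneg _ hya) _ hya _ (neg_le_of_abs_le hb) (le_of_abs_le hb)
  ext z
  simp only [Set.mem_mul, Set.mem_add, Set.mem_singleton_iff, Set.mem_smul_set,
    smul_eq_mul]
  constructor
  · rintro ⟨u, ⟨o, rfl, w, ⟨x, hx, rfl⟩, rfl⟩, v, ⟨o', rfl, w', ⟨y, hy, rfl⟩, rfl⟩, rfl⟩
    refine ⟨1, rfl, a⁻¹ * (x + y + a⁻¹ * x * y), ⟨x + y + a⁻¹ * x * y,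
      hadd _ (hadd _ hx _ hy) _ (key x hx y hy), rfl⟩, ?_⟩
    field_simp
    ring
  · rintro ⟨o, rfl, w, ⟨x, hx, rfl⟩, rfl⟩
    exact ⟨1 + a⁻¹ * x, ⟨1, rfl, a⁻¹ * x, ⟨x, hx, rfl⟩, rfl⟩,
      1, ⟨1, rfl, a⁻¹ * 0, ⟨0, h0, rfl⟩, by ring⟩, by ring⟩
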